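/- Let Φ be a sequence of N positive roots of A_r spanning the hyperplane E_r, with m_{ij} the multiplicity of e^i − e^j in Φ. Then the nice-chamber volume polynomial v_Φ^+(a_1,…,a_r) is homogeneous of degree N − r, is divisible in ℚ[a_1,…,a_r] by a_1^q where q = (Σ_{k=2}^{r+1} m_{1k}) − 1, and has degree at most m_{r,r+1} − 1 in the variable a_r. -/

import Mathlib

noncomputable section

/-- The tower of rational function fields `ℚ ⊂ ℚ(x_1) ⊂ ℚ(x_1,x_2) ⊂ ⋯`. -/
def RFpair : ℕ → ((K : Type) × Field K) := fun n =>
  Nat.rec ⟨ℚ, inferInstance⟩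
    (fun _ p => letI : Field p.1 := p.2; ⟨RatFunc p.1, inferInstance⟩) n

/-- The field `ℚ(x_1,…,x_n)` of rational functions in `n` variables. -/
abbrev RF (n : ℕ) : Type := (RFpair n).1

instance RFfield (n : ℕ) : Field (RF n) := (RFpair n).2

/-- The residue at `x_n = 0`: the coefficient of `x_n⁻¹` in the Laurent expansion at
`x_n = 0` over the field `ℚ(x_1,…,x_{n-1})`. -/
def resRF (n : ℕ) (f : RatFunc (RF n)) : RF n :=
  ((@algebraMap (RatFunc (RF n)) (LaurentSeries (RF n)) _ _
    (RatFunc.liftAlgebra (RF n) (LaurentSeries (RF n)))) f).coeff (-1)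

/-- The iterated residue `Ires_{x=0} = Res_{x_1=0} ⋯ Res_{x_n=0}` (innermost residue in
the last variable). -/
def Ires : (n : ℕ) → RF n → ℚ
  | 0, f => f
  | n+1, f => Ires n (resRF n f)

/-- The variable `x_i` (1-indexed); `0` if out of range, in particular `x_{n+1} = 0`. -/
def Xv : (n : ℕ) → ℕ → RF n
  | 0, _ => 0
  | n+1, i =>
    if i = n+1 then (RatFunc.X : RatFunc (RF n))
    else ((RatFunc.C (Xv n i) : RatFunc (RF n)) : RF (n+1))

/-- The positive root `e^{p.1} - e^{p.2}` of `A_r` as a rational vector. -/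
def rootVQ (r : ℕ) (p : Fin (r+1) × Fin (r+1)) : Fin (r+1) → ℚ :=
  fun k => if k = p.1 then 1 else if k = p.2 then -1 else 0

/-- `Φ` (given by its multiplicity function `m`) spans `E_r`: its span is the span of all
positive roots. -/
def SpansE (r : ℕ) (m : Fin (r+1) → Fin (r+1) → ℕ) : Prop :=
  Submodule.span ℚ {v | ∃ p : Fin (r+1) × Fin (r+1), p.1 < p.2 ∧ 0 < m p.1 p.2 ∧
      v = rootVQ r p} =
    Submodule.span ℚ {v | ∃ p : Fin (r+1) × Fin (r+1), p.1 < p.2 ∧ v = rootVQ r p}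

/-- The number of elements of `Φ` (with multiplicities). -/
def Nphi (r : ℕ) (m : Fin (r+1) → Fin (r+1) → ℕ) : ℕ := ∑ a, ∑ b, m a b

/-- The denominator `∏_{1 ≤ i < j ≤ r}(x_i - x_j)^{m_{ij}} · ∏_j x_j^{m_{j,r+1}}`
(using `x_{r+1} = 0`). -/
def denRF (r : ℕ) (m : Fin (r+1) → Fin (r+1) → ℕ) : RF r :=
  ∏ a : Fin (r+1), ∏ b : Fin (r+1),
    if a < b then (Xv r ((a : ℕ)+1) - Xv r ((b : ℕ)+1)) ^ (m a b) else 1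

/-- The iterated residue `c_i = Ires_{x=0} (x_1^{i_1}⋯x_r^{i_r} / denominator)`. -/
def coeffI (r : ℕ) (m : Fin (r+1) → Fin (r+1) → ℕ) (i : Fin r → ℕ) : ℚ :=
  Ires r ((∏ j : Fin r, Xv r ((j : ℕ)+1) ^ (i j)) / denRF r m)

/-- The nice-chamber volume polynomial
`v_Φ^+(a) = ∑_{|i| = N-r} c_i · ∏_j a_j^{i_j}/i_j!`. -/
def vPlus (r : ℕ) (m : Fin (r+1) → Fin (r+1) → ℕ) : MvPolynomial (Fin r) ℚ :=
  ∑ i ∈ Finset.Nat.antidiagonalTuple r (Nphi r m - r),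
    MvPolynomial.C (coeffI r m i / ∏ j, (Nat.factorial (i j) : ℚ)) *
      ∏ j, MvPolynomial.X j ^ (i j)



-- ### auxiliary development

/-- The coercion of rational functions to Laurent series, as a ring hom. -/
def coeAH (F : Type) [Field F] : RatFunc F →+* LaurentSeries F :=
  @algebraMap (RatFunc F) (LaurentSeries F) _ _ (RatFunc.liftAlgebra F (LaurentSeries F))

/-- Tower of iterated Laurent series fields. -/
@[reducible] def Lpair : ℕ → ((K : Type) × Field K) := fun n =>
  Nat.rec ⟨ℚ, inferInstance⟩
    (fun _ p => letI : Field p.1 := p.2; ⟨LaurentSeries p.1, inferInstance⟩) n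

abbrev Lf (n : ℕ) : Type := (Lpair n).1

instance Lfield (n : ℕ) : Field (Lf n) := (Lpair n).2

example (n : ℕ) : Lf (n+1) = LaurentSeries (Lf n) := rfl

/-- Coefficient-wise map of Laurent series as a ring hom. -/
def hmap {R S : Type} [Field R] [Field S] (f : R →+* S) :
    LaurentSeries R →+* LaurentSeries S where
  toFun x := x.map f
  map_one' := HahnSeries.map_one f.toMonoidWithZeroHom
  map_mul' x y := HahnSeries.map_mul (f : R →ₙ+* S)
  map_zero' := HahnSeries.map_zero (f : ZeroHom R S)
  map_add' x y := HahnSeries.map_add (f : R →+ S)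

@[simp] lemma hmap_coeff {R S : Type} [Field R] [Field S] (f : R →+* S)
    (x : LaurentSeries R) (k : ℤ) : (hmap f x).coeff k = f (x.coeff k) := rfl

/-- The embedding of `ℚ(x_1,…,x_n)` into iterated Laurent series. -/
def iota : (n : ℕ) → RF n →+* Lf n
  | 0 => RingHom.id ℚ
  | n+1 => ((hmap (iota n)).comp (coeAH (RF n)) : RatFunc (RF n) →+* LaurentSeries (Lf n))

lemma iota_coeff (n : ℕ) (f : RF (n+1)) (k : ℤ) :
    (iota (n+1) f : LaurentSeries (Lf n)).coeff k
      = iota n (((coeAH (RF n)) f).coeff k) := rfl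

lemma iota_resRF (n : ℕ) (f : RF (n+1)) :
    iota n (resRF n f) = (iota (n+1) f : LaurentSeries (Lf n)).coeff (-1) := rfl

lemma iota_injective (n : ℕ) : Function.Injective (iota n) :=
  (iota n).injective


-- chunk B: Xv basics and representations
lemma Xv_top (n : ℕ) : Xv (n+1) (n+1) = (RatFunc.X : RatFunc (RF n)) := by
  simp [Xv]
  rfl

lemma Xv_lower (n i : ℕ) (h : i ≠ n+1) :
    Xv (n+1) i = (RatFunc.C (Xv n i) : RatFunc (RF n)) := by
  simp [Xv, h]
  rfl

lemma Xv_out : ∀ n i, n < i → Xv n i = 0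
  | 0, _, _ => rfl
  | n+1, i, h => by
    rw [Xv_lower n i (by omega), Xv_out n i (by omega)]
    exact map_zero _

lemma RatC_injective (n : ℕ) : Function.Injective (RatFunc.C : RF n →+* RatFunc (RF n)) :=
  (RatFunc.C : RF n →+* RatFunc (RF n)).injective

lemma Xv_ne_zero : ∀ n j, 1 ≤ j → j ≤ n → Xv n j ≠ 0
  | 0, _, h1, h2 => by omega
  | n+1, j, h1, h2 => by
    by_cases hj : j = n+1
    · subst hj; rw [Xv_top]; exact RatFunc.X_ne_zero
    · rw [Xv_lower n j hj]
      intro h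
      exact Xv_ne_zero n j h1 (by omega) ((map_eq_zero_iff _ (RatC_injective n)).mp h)

lemma hmap_single {R S : Type} [Field R] [Field S] (f : R →+* S) (a : ℤ) (r : R) :
    hmap f (HahnSeries.single a r) = HahnSeries.single a (f r) := by
  ext k
  rw [hmap_coeff]
  rw [HahnSeries.coeff_single, HahnSeries.coeff_single]
  split <;> simp

lemma iota_C (n : ℕ) (u : RF n) :
    iota (n+1) ((RatFunc.C u : RatFunc (RF n)) : RF (n+1))
      = HahnSeries.single (0:ℤ) (iota n u) := by
  show hmap (iota n) ((coeAH (RF n)) (RatFunc.C u)) = _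
  rw [show ((coeAH (RF n)) (RatFunc.C u)) = HahnSeries.C u by
    letI := RatFunc.liftAlgebra (RF n) (LaurentSeries (RF n))
    rw [← RatFunc.algebraMap_C]
    exact (IsScalarTower.algebraMap_apply (Polynomial (RF n)) (RatFunc (RF n)) _ _).symm.trans (by simp)]
  rw [show (HahnSeries.C u : LaurentSeries (RF n)) = HahnSeries.single 0 u from rfl]
  exact hmap_single _ _ _

lemma iota_X (n : ℕ) :
    iota (n+1) ((RatFunc.X : RatFunc (RF n)) : RF (n+1)) = HahnSeries.single (1:ℤ) 1 := by
  show hmap (iota n) ((coeAH (RF n)) RatFunc.X) = _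
  rw [show ((coeAH (RF n)) RatFunc.X) = HahnSeries.single 1 1 from RatFunc.coe_X]
  rw [hmap_single, map_one]

lemma iota_inv_eq {n : ℕ} {u : RF n} (hu : u ≠ 0) {G : Lf n} (h : iota n u * G = 1) :
    iota n u⁻¹ = G := by
  calc iota n u⁻¹ = iota n u⁻¹ * iota n u * G := by rw [mul_assoc, h, mul_one]
    _ = G := by rw [← map_mul, inv_mul_cancel₀ hu, map_one, one_mul]

lemma iota_Xinv (n : ℕ) :
    iota (n+1) (((RatFunc.X : RatFunc (RF n)) : RF (n+1))⁻¹)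
      = HahnSeries.single (-1:ℤ) 1 := by
  apply iota_inv_eq RatFunc.X_ne_zero
  rw [iota_X, HahnSeries.single_mul_single, mul_one]
  norm_num

-- chunk C : geometric series
def Gs (n : ℕ) (c : RF n) : Lf (n+1) :=
  HahnSeries.ofPowerSeries ℤ (Lf n) (PowerSeries.mk fun k => iota n (c⁻¹ ^ (k+1)))

lemma Gs_coeff_nat (n : ℕ) (c : RF n) (k : ℕ) :
    (Gs n c : LaurentSeries (Lf n)).coeff (k : ℤ) = iota n (c⁻¹ ^ (k+1)) := by
  have h := HahnSeries.ofPowerSeries_apply_coeff (Γ := ℤ)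
    (PowerSeries.mk fun j => iota n (c⁻¹ ^ (j+1))) k
  rw [PowerSeries.coeff_mk] at h
  exact h

lemma Gs_coeff_neg (n : ℕ) (c : RF n) (k : ℤ) (hk : k < 0) :
    (Gs n c : LaurentSeries (Lf n)).coeff k = 0 := by
  have h : Gs n c
      = HahnSeries.ofPowerSeries ℤ (Lf n) (PowerSeries.mk fun j => iota n (c⁻¹ ^ (j+1))) := rfl
  rw [h, HahnSeries.ofPowerSeries_apply]
  apply HahnSeries.embDomain_notin_range
  intro hmem
  obtain ⟨a, ha⟩ := hmem
  have ha' : (a : ℤ) = k := ha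
  omega

lemma sub_coeff' (n : ℕ) (f g : Lf (n+1)) (k : ℤ) :
    ((f - g : Lf (n+1)) : LaurentSeries (Lf n)).coeff k = f.coeff k - g.coeff k :=
  HahnSeries.coeff_sub

lemma mul_coeff' (n : ℕ) (f g : Lf (n+1)) (k : ℤ) :
    ((f * g : Lf (n+1)) : LaurentSeries (Lf n)).coeff k
      = ((f : LaurentSeries (Lf n)) * (g : LaurentSeries (Lf n))).coeff k := rfl

lemma one_coeff_zero (n : ℕ) :
    ((1 : Lf (n+1)) : LaurentSeries (Lf n)).coeff (0:ℤ) = 1 := by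
  simp [HahnSeries.coeff_one]

lemma one_coeff_ne (n : ℕ) (k : ℤ) (hk : k ≠ 0) :
    ((1 : Lf (n+1)) : LaurentSeries (Lf n)).coeff k = 0 := by
  simp [HahnSeries.coeff_one, hk]

lemma CsubX_ne_zero (n : ℕ) (c : RF n) :
    ((RatFunc.C c - RatFunc.X : RatFunc (RF n)) : RF (n+1)) ≠ 0 := by
  intro h
  have h2 := congrArg (iota (n+1)) h
  erw [map_sub, iota_C, iota_X, map_zero] at h2
  have h3 : ((HahnSeries.single (0:ℤ) (iota n c) - HahnSeries.single (1:ℤ) (1 : Lf n))).coeff 1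
      = (0 : LaurentSeries (Lf n)).coeff 1 := by rw [h2]
  rw [HahnSeries.coeff_sub, HahnSeries.coeff_single, HahnSeries.coeff_single] at h3
  norm_num at h3

lemma iota_CsubX_inv (n : ℕ) (c : RF n) (hc : c ≠ 0) :
    iota (n+1) (((RatFunc.C c - RatFunc.X : RatFunc (RF n)) : RF (n+1))⁻¹) = Gs n c := by
  apply iota_inv_eq (CsubX_ne_zero n c)
  erw [map_sub, iota_C, iota_X]
  ext k
  rw [sub_mul, sub_coeff']
  have h1 : ((HahnSeries.single (0:ℤ) (iota n c) * Gs n c : Lf (n+1))).coeff k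
      = iota n c * (Gs n c).coeff k := by
    have h := HahnSeries.coeff_single_mul_add (r := iota n c)
      (x := (Gs n c : LaurentSeries (Lf n))) (a := k) (b := 0)
    rw [add_zero] at h
    exact h
  have h2 : ((HahnSeries.single (1:ℤ) (1 : Lf n) * Gs n c : Lf (n+1))).coeff k
      = (Gs n c).coeff (k-1) := by
    have h := HahnSeries.coeff_single_mul_add (r := (1 : Lf n))
      (x := (Gs n c : LaurentSeries (Lf n))) (a := k-1) (b := 1)
    rw [sub_add_cancel, one_mul] at h
    exact h
  rw [h1, h2]
  rcases lt_trichotomy k 0 with hk | hk | hk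
  · rw [Gs_coeff_neg n c k hk, Gs_coeff_neg n c (k-1) (by omega), mul_zero, sub_zero,
      one_coeff_ne n k (by omega)]
  · subst hk
    rw [show ((0:ℤ) - 1) = -1 from rfl, Gs_coeff_neg n c (-1) (by omega), sub_zero,
      one_coeff_zero, show ((0:ℤ)) = ((0:ℕ):ℤ) from rfl, Gs_coeff_nat, ← map_mul]
    rw [show c * c⁻¹ ^ (0 + 1) = 1 by rw [zero_add, pow_one, mul_inv_cancel₀ hc], map_one]
  · obtain ⟨a, rfl⟩ : ∃ a : ℕ, k = ((a+1 : ℕ) : ℤ) := ⟨(k-1).toNat, by omega⟩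
    rw [show ((((a+1:ℕ)):ℤ) - 1) = ((a:ℕ):ℤ) by push_cast; omega, Gs_coeff_nat, Gs_coeff_nat,
      ← map_mul, one_coeff_ne n _ (by omega)]
    rw [show c * c⁻¹ ^ (a + 1 + 1) = c⁻¹ ^ (a+1) by
      rw [pow_succ' (c⁻¹) (a+1), ← mul_assoc, mul_inv_cancel₀ hc, one_mul]]
    rw [sub_self]

-- chunk D : boundedness predicates
/-- All iterated coefficients have degree `≤ d` in the innermost variable `x₁`. -/
def Bnd : (n : ℕ) → ℤ → Lf n → Prop
  | 0, _, _ => True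
  | 1, d, f => ∀ k : ℤ, d < k → (f : LaurentSeries ℚ).coeff k = 0
  | (n+2), d, f => ∀ k : ℤ, Bnd (n+1) d ((f : LaurentSeries (Lf (n+1))).coeff k)

lemma Bnd_zero : ∀ n d, Bnd n d 0
  | 0, _ => trivial
  | 1, _ => fun _ _ => HahnSeries.coeff_zero
  | n+2, d => by
    intro k
    have h : ((0 : Lf (n+2)) : LaurentSeries (Lf (n+1))).coeff k = 0 := HahnSeries.coeff_zero
    rw [h]
    exact Bnd_zero (n+1) d

lemma Bnd_mono : ∀ n {d e : ℤ}, d ≤ e → ∀ {f : Lf n}, Bnd n d f → Bnd n e f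
  | 0, _, _, _, _, _ => trivial
  | 1, d, e, hde, f, hf => fun k hk => hf k (by omega)
  | n+2, d, e, hde, f, hf => fun k => Bnd_mono (n+1) hde (hf k)

lemma Bnd_add : ∀ n (d : ℤ) (f g : Lf n), Bnd n d f → Bnd n d g → Bnd n d (f + g)
  | 0, _, _, _, _, _ => trivial
  | 1, d, f, g, hf, hg => by
    intro k hk
    have h : ((f + g : Lf 1) : LaurentSeries ℚ).coeff k = f.coeff k + g.coeff k :=
      HahnSeries.coeff_add
    rw [h, hf k hk, hg k hk, add_zero]
  | n+2, d, f, g, hf, hg => by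
    intro k
    have h : ((f + g : Lf (n+2)) : LaurentSeries (Lf (n+1))).coeff k
        = f.coeff k + g.coeff k := HahnSeries.coeff_add
    rw [h]
    exact Bnd_add (n+1) d _ _ (hf k) (hg k)

lemma Bnd_sum (n : ℕ) (d : ℤ) {α : Type*} (s : Finset α) (F : α → Lf n)
    (h : ∀ a ∈ s, Bnd n d (F a)) : Bnd n d (∑ a ∈ s, F a) :=
  Finset.sum_induction F (Bnd n d) (Bnd_add n d) (Bnd_zero n d) h

lemma Bnd_one : ∀ n, Bnd n 0 1
  | 0 => trivial
  | 1 => by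
    intro k hk
    rw [HahnSeries.coeff_one, if_neg (by omega)]
  | n+2 => by
    intro k
    rw [HahnSeries.coeff_one]
    split
    · exact Bnd_one (n+1)
    · exact Bnd_zero (n+1) 0

lemma Bnd_mul : ∀ n (c d : ℤ) (f g : Lf n), Bnd n c f → Bnd n d g → Bnd n (c + d) (f * g)
  | 0, _, _, _, _, _, _ => trivial
  | 1, c, d, f, g, hf, hg => by
    intro k hk
    have h : ((f * g : Lf 1) : LaurentSeries ℚ).coeff k
        = ∑ ij ∈ Finset.antidiagonal f.isPWO_support g.isPWO_support k,
            f.coeff ij.1 * g.coeff ij.2 := HahnSeries.coeff_mul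
    rw [h]
    apply Finset.sum_eq_zero
    rintro ⟨i, j⟩ hij
    rw [Finset.mem_antidiagonal] at hij
    obtain ⟨hi, hj, hijk⟩ := hij
    by_cases hic : c < i
    · rw [hf i hic, zero_mul]
    · rw [hg j (by omega), mul_zero]
  | n+2, c, d, f, g, hf, hg => by
    intro k
    have h : ((f * g : Lf (n+2)) : LaurentSeries (Lf (n+1))).coeff k
        = ∑ ij ∈ Finset.antidiagonal f.isPWO_support g.isPWO_support k,
            f.coeff ij.1 * g.coeff ij.2 := HahnSeries.coeff_mul
    rw [h]
    apply Bnd_sum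
    rintro ⟨i, j⟩ _
    exact Bnd_mul (n+1) c d _ _ (hf i) (hg j)

lemma Bnd_pow (n : ℕ) (c : ℤ) (f : Lf n) (hf : Bnd n c f) :
    ∀ k : ℕ, Bnd n ((k : ℤ) * c) (f ^ k)
  | 0 => by
    rw [pow_zero]
    exact Bnd_mono n (by simp) (Bnd_one n)
  | k+1 => by
    rw [pow_succ, show ((k+1:ℕ):ℤ) * c = (k:ℤ)*c + c by push_cast; ring]
    exact Bnd_mul n ((k:ℤ)*c) c _ _ (Bnd_pow n c f hf k) hf

lemma Bnd_prod (n : ℕ) {α : Type*} (s : Finset α) (w : α → ℤ) (F : α → Lf n)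
    (h : ∀ a ∈ s, Bnd n (w a) (F a)) :
    Bnd n (∑ a ∈ s, w a) (∏ a ∈ s, F a) := by
  classical
  induction s using Finset.induction_on with
  | empty => simpa using Bnd_one n
  | insert a s hx ih =>
    rw [Finset.sum_insert hx, Finset.prod_insert hx]
    exact Bnd_mul n _ _ _ _ (h a (Finset.mem_insert_self a s))
      (ih fun b hb => h b (Finset.mem_insert_of_mem hb))

lemma Bnd_single_zero : ∀ n, 1 ≤ n → ∀ (d : ℤ) (x : Lf n), Bnd n d x →
    Bnd (n+1) d (HahnSeries.single (0:ℤ) x : Lf (n+1))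
  | n+1, _, d, x, hx => by
    intro k
    rw [HahnSeries.coeff_single]
    split
    · exact hx
    · exact Bnd_zero (n+1) d

/-- Low-order bound on the outermost variable. -/
def LBnd {R : Type} [Zero R] (c : ℤ) (f : LaurentSeries R) : Prop :=
  ∀ k : ℤ, k < c → f.coeff k = 0

lemma LBnd_mono {R : Type} [Zero R] {c e : ℤ} (h : e ≤ c) {f : LaurentSeries R}
    (hf : LBnd c f) : LBnd e f := fun k hk => hf k (by omega)

lemma LBnd_one {R : Type} [Field R] : LBnd (0:ℤ) (1 : LaurentSeries R) := by
  intro k hk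
  rw [HahnSeries.coeff_one, if_neg (by omega)]

lemma LBnd_mul {R : Type} [Field R] {c d : ℤ} {f g : LaurentSeries R}
    (hf : LBnd c f) (hg : LBnd d g) : LBnd (c + d) (f * g) := by
  intro k hk
  rw [HahnSeries.coeff_mul]
  apply Finset.sum_eq_zero
  rintro ⟨i, j⟩ hij
  rw [Finset.mem_antidiagonal] at hij
  obtain ⟨hi, hj, hijk⟩ := hij
  by_cases hic : i < c
  · rw [hf i hic, zero_mul]
  · rw [hg j (by omega), mul_zero]

lemma LBnd_pow {R : Type} [Field R] {c : ℤ} {f : LaurentSeries R} (hf : LBnd c f) :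
    ∀ k : ℕ, LBnd ((k : ℤ) * c) (f ^ k)
  | 0 => by
    rw [pow_zero]
    exact LBnd_mono (by simp) LBnd_one
  | k+1 => by
    rw [pow_succ, show ((k+1:ℕ):ℤ) * c = (k:ℤ)*c + c by push_cast; ring]
    exact LBnd_mul (LBnd_pow hf k) hf

lemma LBnd_prod {R : Type} [Field R] {α : Type*} (s : Finset α) (w : α → ℤ)
    (F : α → LaurentSeries R) (h : ∀ a ∈ s, LBnd (w a) (F a)) :
    LBnd (∑ a ∈ s, w a) (∏ a ∈ s, F a) := by
  classical
  induction s using Finset.induction_on with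
  | empty => simpa using LBnd_one
  | insert a s hx ih =>
    rw [Finset.sum_insert hx, Finset.prod_insert hx]
    exact LBnd_mul (h a (Finset.mem_insert_self a s))
      (ih fun b hb => h b (Finset.mem_insert_of_mem hb))

lemma LBnd_single {R : Type} [Field R] (a : ℤ) (x : R) :
    LBnd a (HahnSeries.single a x) := by
  intro k hk
  rw [HahnSeries.coeff_single, if_neg (by omega)]

-- chunk E : vanishing of iterated residues, Bnd of factors
lemma resRF_zero (n : ℕ) : resRF n 0 = 0 := by
  unfold resRF
  rw [map_zero]
  exact HahnSeries.coeff_zero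

lemma Ires_zero : ∀ n, Ires n 0 = 0
  | 0 => rfl
  | n+1 => by
    show Ires n (resRF n 0) = 0
    rw [resRF_zero n]
    exact Ires_zero n

lemma Ires_eq_zero_of_Bnd : ∀ n, 1 ≤ n → ∀ f : RF n, ∀ d : ℤ, d ≤ -2 →
    Bnd n d (iota n f) → Ires n f = 0
  | 1, _, f, d, hd, hB => by
    show resRF 0 f = 0
    have h := hB (-1) (by omega)
    exact h
  | n+2, _, f, d, hd, hB => by
    show Ires (n+1) (resRF (n+1) f) = 0
    apply Ires_eq_zero_of_Bnd (n+1) (by omega) _ d hd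
    rw [iota_resRF]
    exact hB (-1)

lemma Ires_eq_zero_of_LBnd (n : ℕ) (f : RF (n+1)) (c : ℤ) (hc : 0 ≤ c)
    (h : LBnd c (iota (n+1) f : LaurentSeries (Lf n))) : Ires (n+1) f = 0 := by
  have h0 : iota n (resRF n f) = 0 := by rw [iota_resRF]; exact h (-1) (by omega)
  have h1 : resRF n f = 0 := iota_injective n (by rw [h0, map_zero])
  show Ires n (resRF n f) = 0
  rw [h1]
  exact Ires_zero n



lemma Bnd1_single (a : ℤ) (x : Lf 0) {d : ℤ} (h : a ≤ d) :
    Bnd 1 d (HahnSeries.single a x : Lf 1) := by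
  intro k hk
  rw [HahnSeries.coeff_single, if_neg (by omega)]

lemma Bnd_single_any (n : ℕ) (a d : ℤ) (x : Lf (n+1)) (h : Bnd (n+1) d x) :
    Bnd (n+2) d (HahnSeries.single a x : Lf (n+2)) := by
  intro k
  rw [HahnSeries.coeff_single]
  split
  · exact h
  · exact Bnd_zero (n+1) d

lemma C_inv (n : ℕ) (u : RF n) :
    (((RatFunc.C u : RatFunc (RF n)) : RF (n+1)))⁻¹
      = ((RatFunc.C u⁻¹ : RatFunc (RF n)) : RF (n+1)) :=
  (map_inv₀ (RatFunc.C : RF n →+* RatFunc (RF n)) u).symm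

lemma C_sub (n : ℕ) (u v : RF n) :
    (((RatFunc.C u : RatFunc (RF n)) : RF (n+1)))
        - (((RatFunc.C v : RatFunc (RF n)) : RF (n+1)))
      = ((RatFunc.C (u - v) : RatFunc (RF n)) : RF (n+1)) :=
  (map_sub (RatFunc.C : RF n →+* RatFunc (RF n)) u v).symm

lemma Bnd_iota_Xv : ∀ n j, 1 ≤ j → j ≤ n →
    Bnd n (if j = 1 then 1 else 0) (iota n (Xv n j))
  | 0, j, h1, h2 => absurd h2 (by omega)
  | n+1, j, h1, h2 => by
    by_cases hj : j = n+1
    · subst hj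
      rw [Xv_top, iota_X]
      rcases Nat.eq_zero_or_pos n with hn | hn
      · subst hn
        rw [if_pos rfl]
        exact Bnd1_single 1 1 le_rfl
      · obtain ⟨m, rfl⟩ : ∃ m, n = m+1 := ⟨n-1, by omega⟩
        rw [if_neg (by omega)]
        exact Bnd_single_any m 1 0 1 (Bnd_one (m+1))
    · rw [Xv_lower n j hj, iota_C]
      exact Bnd_single_zero n (by omega) _ _ (Bnd_iota_Xv n j h1 (by omega))

lemma Bnd_iota_Xv_inv : ∀ n j, 1 ≤ j → j ≤ n →
    Bnd n (if j = 1 then -1 else 0) (iota n ((Xv n j)⁻¹))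
  | 0, j, h1, h2 => absurd h2 (by omega)
  | n+1, j, h1, h2 => by
    by_cases hj : j = n+1
    · subst hj
      rw [Xv_top, iota_Xinv]
      rcases Nat.eq_zero_or_pos n with hn | hn
      · subst hn
        rw [if_pos rfl]
        exact Bnd1_single (-1) 1 le_rfl
      · obtain ⟨m, rfl⟩ : ∃ m, n = m+1 := ⟨n-1, by omega⟩
        rw [if_neg (by omega)]
        exact Bnd_single_any m (-1) 0 1 (Bnd_one (m+1))
    · erw [Xv_lower n j hj, C_inv, iota_C]
      exact Bnd_single_zero n (by omega) _ _ (Bnd_iota_Xv_inv n j h1 (by omega))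

lemma Bnd_iota_diff_inv : ∀ n s t, 1 ≤ s → s < t → t ≤ n →
    Bnd n (if s = 1 then -1 else 0) (iota n ((Xv n s - Xv n t)⁻¹))
  | 0, s, t, hs, hst, htn => absurd htn (by omega)
  | n+1, s, t, hs, hst, htn => by
    by_cases ht : t = n+1
    · subst ht
      have hsn : s ≤ n := by omega
      obtain ⟨m, rfl⟩ : ∃ m, n = m+1 := ⟨n-1, by omega⟩
      rw [Xv_top, Xv_lower _ s (by omega)]
      erw [iota_CsubX_inv (m+1) (Xv (m+1) s) (Xv_ne_zero (m+1) s hs hsn)]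
      intro k
      rcases lt_or_ge k 0 with hk | hk
      · rw [Gs_coeff_neg _ _ k hk]
        exact Bnd_zero (m+1) _
      · obtain ⟨a, rfl⟩ : ∃ a : ℕ, k = (a : ℤ) := ⟨k.toNat, by omega⟩
        rw [Gs_coeff_nat]
        rw [map_pow]
        have hp := Bnd_pow (m+1) _ _ (Bnd_iota_Xv_inv (m+1) s hs hsn) (a+1)
        apply Bnd_mono (m+1) _ hp
        split_ifs
        · push_cast; omega
        · simp
    · erw [Xv_lower _ s (by omega), Xv_lower _ t ht, C_sub, C_inv, iota_C]
      exact Bnd_single_zero n (by omega) _ _ (Bnd_iota_diff_inv n s t hs hst (by omega))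

-- LBnd facts at the top level
lemma LBnd_iota_Xv_top (n : ℕ) :
    LBnd 1 (iota (n+1) (Xv (n+1) (n+1)) : LaurentSeries (Lf n)) := by
  rw [Xv_top, iota_X]
  exact LBnd_single 1 1

lemma LBnd_iota_Xv_low (n j : ℕ) (hj : j ≠ n+1) :
    LBnd 0 (iota (n+1) (Xv (n+1) j) : LaurentSeries (Lf n)) := by
  rw [Xv_lower n j hj, iota_C]
  exact LBnd_single 0 _

lemma LBnd_iota_Xv_top_inv (n : ℕ) :
    LBnd (-1) (iota (n+1) ((Xv (n+1) (n+1))⁻¹) : LaurentSeries (Lf n)) := by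
  rw [Xv_top, iota_Xinv]
  exact LBnd_single (-1) 1

lemma LBnd_iota_Xv_low_inv (n j : ℕ) (hj : j ≠ n+1) :
    LBnd 0 (iota (n+1) ((Xv (n+1) j)⁻¹) : LaurentSeries (Lf n)) := by
  erw [Xv_lower n j hj, C_inv, iota_C]
  exact LBnd_single 0 _

lemma LBnd_iota_diff_inv_top (n s : ℕ) (hs1 : 1 ≤ s) (hs : s ≤ n) :
    LBnd 0 (iota (n+1) ((Xv (n+1) s - Xv (n+1) (n+1))⁻¹) : LaurentSeries (Lf n)) := by
  rw [Xv_top, Xv_lower _ s (by omega)]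
  erw [iota_CsubX_inv n (Xv n s) (Xv_ne_zero n s hs1 hs)]
  intro k hk
  exact Gs_coeff_neg _ _ k hk

lemma LBnd_iota_diff_inv_low (n s t : ℕ) (hs : s ≠ n+1) (ht : t ≠ n+1) :
    LBnd 0 (iota (n+1) ((Xv (n+1) s - Xv (n+1) t)⁻¹) : LaurentSeries (Lf n)) := by
  erw [Xv_lower _ s hs, Xv_lower _ t ht, C_sub, C_inv, iota_C]
  exact LBnd_single 0 _

-- chunk F : the main vanishing lemmas
lemma denRF_inv (r : ℕ) (m : Fin (r+1) → Fin (r+1) → ℕ) :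
    (denRF r m)⁻¹
      = ∏ a : Fin (r+1), ∏ b : Fin (r+1),
          (if a < b then ((Xv r ((a:ℕ)+1) - Xv r ((b:ℕ)+1))⁻¹) ^ (m a b) else 1) := by
  rw [show denRF r m = ∏ a : Fin (r+1), ∏ b : Fin (r+1),
      (if a < b then (Xv r ((a:ℕ)+1) - Xv r ((b:ℕ)+1)) ^ (m a b) else 1) from rfl]
  rw [← Finset.prod_inv_distrib]
  refine Finset.prod_congr rfl fun a _ => ?_
  rw [← Finset.prod_inv_distrib]
  refine Finset.prod_congr rfl fun b _ => ?_
  split_ifs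
  · rw [inv_pow]
  · rw [inv_one]

lemma iota_F_eq (r : ℕ) (m : Fin (r+1) → Fin (r+1) → ℕ) (i : Fin r → ℕ) :
    iota r ((∏ j : Fin r, Xv r ((j:ℕ)+1) ^ (i j)) / denRF r m)
      = (∏ j : Fin r, (iota r (Xv r ((j:ℕ)+1))) ^ (i j))
        * ∏ a : Fin (r+1), ∏ b : Fin (r+1),
            (if a < b then (iota r ((Xv r ((a:ℕ)+1) - Xv r ((b:ℕ)+1))⁻¹)) ^ (m a b) else 1) := by
  rw [div_eq_mul_inv, denRF_inv, map_mul, map_prod, map_prod]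
  congr 1
  · exact Finset.prod_congr rfl fun j _ => map_pow _ _ _
  · refine Finset.prod_congr rfl fun a _ => ?_
    rw [map_prod]
    refine Finset.prod_congr rfl fun b _ => ?_
    rw [apply_ite (iota r), map_pow, map_one]

lemma coeffI_eq_zero_low (r : ℕ) (hr : 1 ≤ r) (m : Fin (r+1) → Fin (r+1) → ℕ)
    (hsupp : ∀ a b : Fin (r+1), ¬ a < b → m a b = 0) (i : Fin r → ℕ)
    (hlow : (i ⟨0, hr⟩ : ℤ) ≤ (∑ b, (m 0 b : ℤ)) - 2) :
    coeffI r m i = 0 := by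
  apply Ires_eq_zero_of_Bnd r hr _ ((i ⟨0, hr⟩ : ℤ) - ∑ b, (m 0 b : ℤ)) (by omega)
  rw [iota_F_eq]
  have hN : (∑ j : Fin r, (if (j:ℕ) = 0 then (i j : ℤ) else 0)) = (i ⟨0, hr⟩ : ℤ) := by
    rw [Finset.sum_eq_single_of_mem (⟨0, hr⟩ : Fin r) (Finset.mem_univ _)
      (fun a _ ha => if_neg (fun h => ha (Fin.ext h)))]
    exact if_pos rfl
  have hD : (∑ a : Fin (r+1), ∑ b : Fin (r+1),
        (if (a:ℕ) = 0 then (if a < b then -(m a b : ℤ) else 0) else 0))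
      = - ∑ b, (m 0 b : ℤ) := by
    rw [Finset.sum_eq_single_of_mem (0 : Fin (r+1)) (Finset.mem_univ _)
      (fun a _ ha => Finset.sum_eq_zero (fun b _ => if_neg (fun (h : (a:ℕ) = 0) => ha (Fin.ext (by simp [h])))))]
    rw [show - ∑ b, (m 0 b : ℤ) = ∑ b, -(m 0 b : ℤ) from (Finset.sum_neg_distrib _).symm]
    refine Finset.sum_congr rfl fun b _ => ?_
    rw [if_pos (by simp : ((0:Fin (r+1)):ℕ) = 0)]
    by_cases hb : (0 : Fin (r+1)) < b
    · rw [if_pos hb]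
    · rw [if_neg hb]
      have hb0 : b = 0 := by
        by_contra hne
        exact hb (Fin.pos_iff_ne_zero.mpr hne)
      rw [hb0, hsupp 0 0 (lt_irrefl 0), Nat.cast_zero, neg_zero]
  have hW : (i ⟨0, hr⟩ : ℤ) - ∑ b, (m 0 b : ℤ)
      = (∑ j : Fin r, (if (j:ℕ) = 0 then (i j : ℤ) else 0))
        + ∑ a : Fin (r+1), ∑ b : Fin (r+1),
            (if (a:ℕ) = 0 then (if a < b then -(m a b : ℤ) else 0) else 0) := by
    rw [hN, hD]
    ring
  rw [hW]
  apply Bnd_mul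
  · apply Bnd_prod
    intro j _
    have hj1 : 1 ≤ (j:ℕ)+1 := by omega
    have hj2 : (j:ℕ)+1 ≤ r := by omega
    have hb := Bnd_pow r _ _ (Bnd_iota_Xv r ((j:ℕ)+1) hj1 hj2) (i j)
    by_cases hj : (j:ℕ) = 0
    · rw [if_pos hj]
      rw [if_pos (by omega), mul_one] at hb
      exact hb
    · rw [if_neg hj]
      rw [if_neg (by omega), mul_zero] at hb
      exact hb
  · apply Bnd_prod
    intro a _
    apply Bnd_prod
    intro b _
    by_cases hab : a < b
    · rw [if_pos hab]
      have hfac : Bnd r (if (a:ℕ)+1 = 1 then -1 else 0)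
          (iota r ((Xv r ((a:ℕ)+1) - Xv r ((b:ℕ)+1))⁻¹)) := by
        by_cases hbr : (b:ℕ) = r
        · rw [show Xv r ((b:ℕ)+1) = 0 from Xv_out r _ (by omega), sub_zero]
          exact Bnd_iota_Xv_inv r ((a:ℕ)+1) (by omega)
            (by have := Fin.lt_def.mp hab; omega)
        · exact Bnd_iota_diff_inv r ((a:ℕ)+1) ((b:ℕ)+1) (by omega)
            (by have := Fin.lt_def.mp hab; omega) (by have := b.isLt; omega)
      have hb2 := Bnd_pow r _ _ hfac (m a b)
      by_cases ha : (a:ℕ) = 0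
      · rw [if_pos ha, if_pos hab]
        rw [if_pos (by omega)] at hb2
        apply Bnd_mono r _ hb2
        omega
      · rw [if_neg ha, if_pos hab]
        rw [if_neg (by omega), mul_zero] at hb2
        exact hb2
    · have hw : (if (a:ℕ) = 0 then (if a < b then -(m a b : ℤ) else 0) else 0) = 0 := by
        simp [hab]
      rw [hw, if_neg hab]
      exact Bnd_one r

-- chunk G : vanishing for large last exponent
lemma coeffI_eq_zero_high (r : ℕ) (hr : 1 ≤ r) (m : Fin (r+1) → Fin (r+1) → ℕ)
    (i : Fin r → ℕ)
    (hhigh : (m ⟨r-1, by have := i; omega⟩ (Fin.last r) : ℤ) ≤ (i ⟨r-1, by have := i; omega⟩ : ℤ)) :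
    coeffI r m i = 0 := by
  obtain ⟨n, rfl⟩ : ∃ n, r = n+1 := ⟨r-1, by omega⟩
  have hnn : n < n + 1 := by omega
  have hn2 : n < n + 2 := by omega
  set aN : Fin (n+2) := ⟨n, hn2⟩ with haN
  set jN : Fin (n+1) := ⟨n, hnn⟩ with hjN
  apply Ires_eq_zero_of_LBnd n _ ((i jN : ℤ) - (m aN (Fin.last (n+1)) : ℤ))
    (by simpa using hhigh)
  rw [iota_F_eq]
  have hW : (i jN : ℤ) - (m aN (Fin.last (n+1)) : ℤ)
      = (∑ j : Fin (n+1), (if j = jN then (i j : ℤ) else 0))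
        + ∑ a : Fin (n+2), ∑ b : Fin (n+2),
            (if a = aN ∧ b = Fin.last (n+1) then -(m a b : ℤ) else 0) := by
    have h1 : (∑ j : Fin (n+1), (if j = jN then (i j : ℤ) else 0)) = (i jN : ℤ) := by
      rw [Finset.sum_eq_single_of_mem jN (Finset.mem_univ _) (fun a _ ha => if_neg ha)]
      exact if_pos rfl
    have h2 : (∑ a : Fin (n+2), ∑ b : Fin (n+2),
          (if a = aN ∧ b = Fin.last (n+1) then -(m a b : ℤ) else 0))
        = -(m aN (Fin.last (n+1)) : ℤ) := by
      rw [Finset.sum_eq_single_of_mem aN (Finset.mem_univ _)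
        (fun a _ ha => Finset.sum_eq_zero (fun b _ => if_neg (fun h => ha h.1)))]
      rw [Finset.sum_eq_single_of_mem (Fin.last (n+1)) (Finset.mem_univ _)
        (fun b _ hb => if_neg (fun h => hb h.2))]
      exact if_pos ⟨rfl, rfl⟩
    rw [h1, h2]
    ring
  rw [hW]
  apply LBnd_mul
  · apply LBnd_prod
    intro j _
    by_cases hj : j = jN
    · rw [if_pos hj, hj]
      have := LBnd_pow (LBnd_iota_Xv_top n) (i jN)
      rw [mul_one] at this
      exact this
    · rw [if_neg hj]
      have hj' : (j:ℕ)+1 ≠ n+1 := by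
        intro h
        apply hj
        apply Fin.ext
        have hv : (jN:ℕ) = n := rfl
        omega
      have := LBnd_pow (LBnd_iota_Xv_low (n) ((j:ℕ)+1) hj') (i j)
      rw [mul_zero] at this
      exact this
  · apply LBnd_prod
    intro a _
    apply LBnd_prod
    intro b _
    by_cases hab : a < b
    · rw [if_pos hab]
      by_cases hbl : (b:ℕ) = n+1
      · rw [show Xv (n+1) ((b:ℕ)+1) = 0 from Xv_out (n+1) _ (by omega), sub_zero]
        by_cases han : (a:ℕ) = n
        · rw [show ((a:ℕ)+1) = n+1 by omega]
          rw [if_pos ⟨Fin.ext (by simpa using han), Fin.ext (by simpa using hbl)⟩]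
          have := LBnd_pow (LBnd_iota_Xv_top_inv n) (m a b)
          rw [mul_neg_one] at this
          exact this
        · rw [if_neg (fun h => han (by rw [h.1]))]
          have := LBnd_pow (LBnd_iota_Xv_low_inv n ((a:ℕ)+1) (by omega)) (m a b)
          rw [mul_zero] at this
          exact this
      · rw [if_neg (fun h => hbl (by rw [h.2]; simp))]
        have hblt : (b:ℕ) < n+1 := by have := b.isLt; omega
        by_cases hbn : (b:ℕ) = n
        · rw [show ((b:ℕ)+1) = n+1 by omega]
          have := LBnd_pow (LBnd_iota_diff_inv_top n ((a:ℕ)+1) (by omega)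
            (by have := Fin.lt_def.mp hab; omega)) (m a b)
          rw [mul_zero] at this
          exact this
        · have := LBnd_pow (LBnd_iota_diff_inv_low n ((a:ℕ)+1) ((b:ℕ)+1)
            (by have := Fin.lt_def.mp hab; omega) (by omega)) (m a b)
          rw [mul_zero] at this
          exact this
    · rw [if_neg hab]
      have hw : (if a = aN ∧ b = Fin.last (n+1) then -(m a b : ℤ) else 0) = 0 := by
        rcases Classical.em (a = aN ∧ b = Fin.last (n+1)) with h | h
        · exfalso
          apply hab
          rw [h.1, h.2]
          exact Fin.lt_def.mpr (by simp [haN])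
        · exact if_neg h
      rw [hw]
      exact LBnd_mono (le_refl 0) LBnd_one


/-- for a sequence `Φ` of `N` positive roots of `A_r` spanning `E_r` (with
multiplicities `m`), the nice-chamber volume polynomial `v_Φ^+` is homogeneous of degree
`N - r`, is divisible by `a_1^{(∑_{k=2}^{r+1} m_{1k}) - 1}`, and has degree at most
`m_{r,r+1} - 1` in the variable `a_r`. -/
theorem stmt9 (r : ℕ) (hr : 1 ≤ r) (m : Fin (r+1) → Fin (r+1) → ℕ)
    (hsupp : ∀ a b : Fin (r+1), ¬ a < b → m a b = 0)
    (hspan : SpansE r m) :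
    MvPolynomial.IsHomogeneous (vPlus r m) (Nphi r m - r) ∧
    (MvPolynomial.X (⟨0, by omega⟩ : Fin r)) ^ ((∑ b, m 0 b) - 1) ∣ vPlus r m ∧
    MvPolynomial.degreeOf (⟨r - 1, by omega⟩ : Fin r) (vPlus r m) ≤
      m (⟨r - 1, by omega⟩ : Fin (r+1)) (Fin.last r) - 1 := by
  refine ⟨?_, ?_, ?_⟩
  · apply MvPolynomial.IsHomogeneous.sum
    intro i hi
    have hsum : ∑ j, i j = Nphi r m - r := Finset.Nat.mem_antidiagonalTuple.mp hi
    have h2 : (∏ j, (MvPolynomial.X j : MvPolynomial (Fin r) ℚ) ^ i j).IsHomogeneous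
        (∑ j, i j) :=
      MvPolynomial.IsHomogeneous.prod _ _ _ (fun j _ => MvPolynomial.isHomogeneous_X_pow j (i j))
    have h3 := (MvPolynomial.isHomogeneous_C (Fin r)
      (coeffI r m i / ∏ j, (Nat.factorial (i j) : ℚ))).mul h2
    rw [zero_add, hsum] at h3
    exact h3
  · apply Finset.dvd_sum
    intro i hi
    by_cases hc : coeffI r m i = 0
    · rw [hc, zero_div, map_zero, zero_mul]
      exact dvd_zero _
    · have hge : ((∑ b, m 0 b) - 1 : ℕ) ≤ i ⟨0, hr⟩ := by
        by_contra hlt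
        push_neg at hlt
        apply hc
        apply coeffI_eq_zero_low r hr m hsupp i
        have hS : (∑ b, ((m 0 b : ℕ) : ℤ)) = (((∑ b, m 0 b : ℕ)) : ℤ) := by push_cast; rfl
        rw [hS]
        omega
      refine dvd_mul_of_dvd_right ?_ _
      exact dvd_trans (pow_dvd_pow _ hge)
        (Finset.dvd_prod_of_mem _ (Finset.mem_univ (⟨0, hr⟩ : Fin r)))
  · apply le_trans (MvPolynomial.degreeOf_sum_le _ _ _)
    apply Finset.sup_le
    intro i hi
    by_cases hc : coeffI r m i = 0
    · rw [hc, zero_div, map_zero, zero_mul, MvPolynomial.degreeOf_zero]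
      exact Nat.zero_le _
    · have hle : i ⟨r-1, by omega⟩ ≤ m (⟨r-1, by omega⟩ : Fin (r+1)) (Fin.last r) - 1 := by
        by_contra hlt
        push_neg at hlt
        apply hc
        apply coeffI_eq_zero_high r hr m i
        have h1 : m (⟨r-1, by omega⟩ : Fin (r+1)) (Fin.last r) ≤ i ⟨r-1, by omega⟩ := by omega
        exact_mod_cast h1
      calc MvPolynomial.degreeOf (⟨r-1, by omega⟩ : Fin r)
            (MvPolynomial.C (coeffI r m i / ∏ j, (Nat.factorial (i j) : ℚ))
              * ∏ j, MvPolynomial.X j ^ i j)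
          ≤ MvPolynomial.degreeOf (⟨r-1, by omega⟩ : Fin r) (∏ j, MvPolynomial.X j ^ i j) :=
            MvPolynomial.degreeOf_C_mul_le _ _ _
        _ ≤ ∑ j, MvPolynomial.degreeOf (⟨r-1, by omega⟩ : Fin r)
              ((MvPolynomial.X j : MvPolynomial (Fin r) ℚ) ^ i j) :=
            MvPolynomial.degreeOf_prod_le _ _ _
        _ ≤ ∑ j, i j * (if (⟨r-1, by omega⟩ : Fin r) = j then 1 else 0) := by
            apply Finset.sum_le_sum
            intro j _
            refine le_trans (MvPolynomial.degreeOf_pow_le _ _ _) ?_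
            rw [MvPolynomial.degreeOf_X]
        _ = i ⟨r-1, by omega⟩ := by
            rw [Finset.sum_congr rfl (fun j _ => show
                i j * (if (⟨r-1, by omega⟩ : Fin r) = j then 1 else 0)
                  = if j = (⟨r-1, by omega⟩ : Fin r) then i j else 0 by
              by_cases h : j = (⟨r-1, by omega⟩ : Fin r)
              · rw [if_pos h.symm, if_pos h, mul_one]
              · rw [if_neg (fun hh => h hh.symm), if_neg h, mul_zero])]
            rw [Finset.sum_eq_single_of_mem (⟨r-1, by omega⟩ : Fin r) (Finset.mem_univ _)
              (fun b _ hb => if_neg hb)]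
            exact if_pos rfl
        _ ≤ m (⟨r-1, by omega⟩ : Fin (r+1)) (Fin.last r) - 1 := hle

end
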